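/- arXiv:1307.5398 — 4 statements merged into one kernel-verified Lean document; each statement's English description precedes it below -/
import Mathlib

section
/- For every W in H_h, the inner products (s_{Nx}W, W)_{H_h} and (s_{Ny}W, W)_{H_h} are real and satisfy (s_{Nx}W, W)_{H_h} >= (2/3)*||W||_{H_h}^2 and (s_{Ny}W, W)_{H_h} >= (2/3)*||W||_{H_h}^2. -/
noncomputable section

/-- Second difference quotient in `x`, with output set to `0` at the boundary
indices `j = 0`, `k = 0`, `k = K` (and, harmlessly, off the mesh `k > K`). -/
def ddx (K : ℕ) (hx : ℝ) (W : ℕ → ℕ → ℂ) : ℕ → ℕ → ℂ := fun j k =>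
  if j = 0 ∨ k = 0 ∨ K ≤ k then 0
  else (W (j + 1) k - 2 * W j k + W (j - 1) k) / (hx : ℂ) ^ 2

/-- Second difference quotient in `y`, with output set to `0` at the boundary. -/
def ddy (K : ℕ) (hy : ℝ) (W : ℕ → ℕ → ℂ) : ℕ → ℕ → ℂ := fun j k =>
  if j = 0 ∨ k = 0 ∨ K ≤ k then 0
  else (W j (k + 1) - 2 * W j k + W j (k - 1)) / (hy : ℂ) ^ 2

/-- Numerov average in `x`: `s_{Nx} = I + (h_x^2/12) ∂_x ∂̄_x`. -/
def sNx (K : ℕ) (hx : ℝ) (W : ℕ → ℕ → ℂ) : ℕ → ℕ → ℂ := fun j k =>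
  W j k + ((hx ^ 2 / 12 : ℝ) : ℂ) * ddx K hx W j k

/-- Numerov average in `y`: `s_{Ny} = I + (h_y^2/12) ∂_y ∂̄_y`. -/
def sNy (K : ℕ) (hy : ℝ) (W : ℕ → ℕ → ℂ) : ℕ → ℕ → ℂ := fun j k =>
  W j k + ((hy ^ 2 / 12 : ℝ) : ℂ) * ddy K hy W j k

/-- Membership in the Hilbert space `H_h` of mesh functions on the semi-infinite strip:
vanishing at `j = 0`, `k = 0`, `k = K`, and square-summable. -/
def memH (K : ℕ) (W : ℕ → ℕ → ℂ) : Prop :=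
  (∀ k, W 0 k = 0) ∧ (∀ j, W j 0 = 0) ∧ (∀ j, W j K = 0) ∧
    Summable fun j : ℕ => ∑ k ∈ Finset.Icc 1 (K - 1), ‖W j k‖ ^ 2

/-- The inner product `(U,W)_{H_h} = ∑_{j ≥ 1} ∑_{k=1}^{K-1} U_{j,k} conj(W_{j,k}) h_x h_y`. -/
def innH (K : ℕ) (hx hy : ℝ) (U W : ℕ → ℕ → ℂ) : ℂ :=
  ∑' j : ℕ, ∑ k ∈ Finset.Icc 1 (K - 1),
    U (j + 1) k * (starRingEnd ℂ) (W (j + 1) k) * ((hx * hy : ℝ) : ℂ)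

open Finset Filter

lemma sq_norm_sub_le (x y : ℂ) : ‖x - y‖^2 ≤ 2*‖x‖^2 + 2*‖y‖^2 := by
  have h := norm_sub_le x y
  nlinarith [norm_nonneg x, norm_nonneg y, norm_nonneg (x - y), sq_nonneg (‖x‖ - ‖y‖)]

lemma summable_mul_conj {u v : ℕ → ℂ} (hu : Summable fun j => ‖u j‖^2)
    (hv : Summable fun j => ‖v j‖^2) :
    Summable fun j => u j * (starRingEnd ℂ) (v j) := by
  apply Summable.of_norm
  apply Summable.of_nonneg_of_le (fun j => norm_nonneg _) (fun j => ?_)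
    ((hu.add hv).div_const 2)
  rw [norm_mul, RCLike.norm_conj]
  nlinarith [norm_nonneg (u j), norm_nonneg (v j), sq_nonneg (‖u j‖ - ‖v j‖)]

lemma tendsto_zero_of_sq_summable {a : ℕ → ℂ} (hs : Summable fun j => ‖a j‖^2) :
    Filter.Tendsto a atTop (nhds 0) := by
  rw [tendsto_zero_iff_norm_tendsto_zero]
  have h1 := hs.tendsto_atTop_zero
  have h2 : Filter.Tendsto (fun j => Real.sqrt (‖a j‖^2)) atTop (nhds (Real.sqrt 0)) :=
    (Real.continuous_sqrt.tendsto 0).comp h1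
  have h3 : ∀ j, Real.sqrt (‖a j‖^2) = ‖a j‖ := fun j => Real.sqrt_sq (norm_nonneg _)
  simpa [h3, Real.sqrt_zero] using h2

lemma mul_conj_self (z : ℂ) : z * (starRingEnd ℂ) z = ((‖z‖^2 : ℝ) : ℂ) := by
  rw [Complex.mul_conj, Complex.normSq_eq_norm_sq]

lemma mul_conj_self' (z : ℂ) : z * (starRingEnd ℂ) z = ((‖z‖ : ℝ) : ℂ)^2 := by
  rw [mul_conj_self]; push_cast; ring

lemma keyX {a : ℕ → ℂ} (h0 : a 0 = 0) (hs : Summable fun j => ‖a j‖^2) :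
    HasSum (fun j => (a (j+2) - 2*a (j+1) + a j) * (starRingEnd ℂ) (a (j+1)))
      (-((∑' j, ‖a (j+1) - a j‖^2 : ℝ) : ℂ)) := by
  have hs1 : Summable fun j => ‖a (j+1)‖^2 :=
    (summable_nat_add_iff (f := fun j => ‖a j‖^2) 1).2 hs
  have hs2 : Summable fun j => ‖a (j+2)‖^2 :=
    (summable_nat_add_iff (f := fun j => ‖a j‖^2) 2).2 hs
  have hdsum : Summable fun j => ‖a (j+1) - a j‖^2 :=
    Summable.of_nonneg_of_le (fun j => sq_nonneg _) (fun j => sq_norm_sub_le _ _)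
      ((hs1.mul_left 2).add (hs.mul_left 2))
  have husum : Summable fun j => ‖a (j+2) - 2*a (j+1) + a j‖^2 := by
    apply Summable.of_nonneg_of_le (fun j => sq_nonneg _) (fun j => ?_)
      (((hs2.mul_left 3).add (hs1.mul_left 12)).add (hs.mul_left 3))
    have h1 : ‖a (j+2) - 2*a (j+1) + a j‖ ≤ ‖a (j+2)‖ + 2*‖a (j+1)‖ + ‖a j‖ := by
      calc ‖a (j+2) - 2*a (j+1) + a j‖ ≤ ‖a (j+2) - 2*a (j+1)‖ + ‖a j‖ := norm_add_le _ _
        _ ≤ ‖a (j+2)‖ + ‖2*a (j+1)‖ + ‖a j‖ := by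
            have := norm_sub_le (a (j+2)) (2*a (j+1)); linarith
        _ = ‖a (j+2)‖ + 2*‖a (j+1)‖ + ‖a j‖ := by
            rw [norm_mul]; norm_num
    have h2 : ‖a (j+2) - 2*a (j+1) + a j‖^2 ≤ (‖a (j+2)‖ + 2*‖a (j+1)‖ + ‖a j‖)^2 := by
      apply pow_le_pow_left₀ (norm_nonneg _) h1
    have h3 : (‖a (j+2)‖ + 2*‖a (j+1)‖ + ‖a j‖)^2
        ≤ 3*‖a (j+2)‖^2 + 12*‖a (j+1)‖^2 + 3*‖a j‖^2 := by
      nlinarith [sq_nonneg (‖a (j+2)‖ - 2*‖a (j+1)‖), sq_nonneg (‖a (j+2)‖ - ‖a j‖),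
        sq_nonneg (2*‖a (j+1)‖ - ‖a j‖)]
    linarith
  have hLsum : Summable (fun j => (a (j+2) - 2*a (j+1) + a j) * (starRingEnd ℂ) (a (j+1))) :=
    summable_mul_conj husum hs1
  set f : ℕ → ℂ := fun j => (a (j+1) - a j) * (starRingEnd ℂ) (a j) with hf
  have hid : ∀ j, (a (j+2) - 2*a (j+1) + a j) * (starRingEnd ℂ) (a (j+1))
      = (f (j+1) - f j) - ((‖a (j+1) - a j‖^2 : ℝ) : ℂ) := by
    intro j
    have hnd := mul_conj_self (a (j+1) - a j)
    simp only [hf]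
    rw [← hnd, map_sub]
    have h11 : a (j+1+1) = a (j+2) := by norm_num
    rw [h11]
    ring
  have hdsumC : Summable fun j => ((‖a (j+1) - a j‖^2 : ℝ) : ℂ) :=
    Complex.summable_ofReal.2 hdsum
  have hgsum : Summable (fun j => f (j+1) - f j) := by
    have he : (fun j => f (j+1) - f j) = fun j =>
        (a (j+2) - 2*a (j+1) + a j) * (starRingEnd ℂ) (a (j+1))
          + ((‖a (j+1) - a j‖^2 : ℝ) : ℂ) := by
      funext j; rw [hid j]; ring
    rw [he]; exact hLsum.add hdsumC
  have hg0 : HasSum (fun j => f (j+1) - f j) 0 := by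
    obtain ⟨S, hS⟩ := hgsum
    have hps := hS.tendsto_sum_nat
    have hps' : ∀ n, ∑ i ∈ range n, (f (i+1) - f i) = f n := by
      intro n; rw [Finset.sum_range_sub]; simp [hf, h0]
    have hf0 : Filter.Tendsto f atTop (nhds 0) := by
      have hda : Filter.Tendsto (fun j => a (j+1) - a j) atTop (nhds 0) :=
        tendsto_zero_of_sq_summable hdsum
      have haa : Filter.Tendsto a atTop (nhds 0) := tendsto_zero_of_sq_summable hs
      have hconj : Filter.Tendsto (fun n => (starRingEnd ℂ) (a n)) atTop (nhds 0) := by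
        have := (Complex.continuous_conj.tendsto 0).comp haa
        simpa [Function.comp_def] using this
      simpa [hf] using hda.mul hconj
    have : S = 0 := tendsto_nhds_unique (by simpa [hps'] using hps) hf0
    rwa [this] at hS
  have hT : HasSum (fun j => ((‖a (j+1) - a j‖^2 : ℝ) : ℂ))
      (((∑' j, ‖a (j+1) - a j‖^2 : ℝ) : ℂ)) := Complex.hasSum_ofReal.2 hdsum.hasSum
  have := hg0.sub hT
  rw [zero_sub] at this
  have hfun : (fun j => (a (j+2) - 2*a (j+1) + a j) * (starRingEnd ℂ) (a (j+1)))
      = fun j => f (j+1) - f j - ((‖a (j+1) - a j‖^2 : ℝ) : ℂ) := funext hid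
  rw [hfun]; exact this

lemma boundX {a : ℕ → ℂ} (h0 : a 0 = 0) (hs : Summable fun j => ‖a j‖^2) :
    ∑' j, ‖a (j+1) - a j‖^2 ≤ 4 * ∑' j, ‖a (j+1)‖^2 := by
  have hs1 : Summable fun j => ‖a (j+1)‖^2 :=
    (summable_nat_add_iff (f := fun j => ‖a j‖^2) 1).2 hs
  have hdsum : Summable fun j => ‖a (j+1) - a j‖^2 :=
    Summable.of_nonneg_of_le (fun j => sq_nonneg _) (fun j => sq_norm_sub_le _ _)
      ((hs1.mul_left 2).add (hs.mul_left 2))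
  have h1 : ∑' j, ‖a (j+1) - a j‖^2 ≤ ∑' j, (2*‖a (j+1)‖^2 + 2*‖a j‖^2) :=
    Summable.tsum_le_tsum (fun j => sq_norm_sub_le _ _) hdsum ((hs1.mul_left 2).add (hs.mul_left 2))
  have h2 : ∑' j, (2*‖a (j+1)‖^2 + 2*‖a j‖^2)
      = 2*(∑' j, ‖a (j+1)‖^2) + 2*(∑' j, ‖a j‖^2) := by
    rw [Summable.tsum_add (hs1.mul_left 2) (hs.mul_left 2), tsum_mul_left, tsum_mul_left]
  have h3 : ∑' j, ‖a j‖^2 = ∑' j, ‖a (j+1)‖^2 := by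
    rw [Summable.tsum_eq_zero_add hs, h0]
    simp
  linarith

lemma keyY {b : ℕ → ℂ} {K : ℕ} (hK : 1 ≤ K) (h0 : b 0 = 0) (hKz : b K = 0) :
    ∑ i ∈ Finset.range (K-1), ((b (i+2) - 2*b (i+1) + b i) * (starRingEnd ℂ) (b (i+1)))
      = -(((∑ i ∈ Finset.range K, ‖b (i+1) - b i‖^2 : ℝ)) : ℂ) := by
  obtain ⟨m, rfl⟩ : ∃ m, K = m + 1 := ⟨K - 1, by omega⟩
  simp only [Nat.add_sub_cancel]
  set f : ℕ → ℂ := fun k => (b (k+1) - b k) * (starRingEnd ℂ) (b k) with hf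
  have hid : ∀ i, (b (i+2) - 2*b (i+1) + b i) * (starRingEnd ℂ) (b (i+1))
      = (f (i+1) - f i) - ((‖b (i+1) - b i‖^2 : ℝ) : ℂ) := by
    intro i
    have hnd := mul_conj_self (b (i+1) - b i)
    simp only [hf]
    rw [← hnd, map_sub]
    have h11 : b (i+1+1) = b (i+2) := by norm_num
    rw [h11]
    ring
  calc ∑ i ∈ Finset.range m, ((b (i+2) - 2*b (i+1) + b i) * (starRingEnd ℂ) (b (i+1)))
      = ∑ i ∈ Finset.range m, ((f (i+1) - f i) - ((‖b (i+1) - b i‖^2 : ℝ) : ℂ)) :=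
        Finset.sum_congr rfl fun i _ => hid i
    _ = (f m - f 0) - ∑ i ∈ Finset.range m, ((‖b (i+1) - b i‖^2 : ℝ) : ℂ) := by
        rw [Finset.sum_sub_distrib, Finset.sum_range_sub]
    _ = -(((∑ i ∈ Finset.range (m+1), ‖b (i+1) - b i‖^2 : ℝ)) : ℂ) := by
        rw [Finset.sum_range_succ]
        have hfm : f m = -((‖b (m+1) - b m‖^2 : ℝ) : ℂ) := by
          have : b (m+1) - b m = -(b m) := by rw [hKz]; ring
          simp only [hf]
          rw [← mul_conj_self (b (m+1) - b m), this, map_neg]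
          ring
        have hf0 : f 0 = 0 := by simp [hf, h0]
        rw [hfm, hf0]
        push_cast
        ring

lemma boundY {b : ℕ → ℂ} {K : ℕ} (hK : 1 ≤ K) (h0 : b 0 = 0) (hKz : b K = 0) :
    ∑ i ∈ Finset.range K, ‖b (i+1) - b i‖^2 ≤ 4 * ∑ i ∈ Finset.range (K-1), ‖b (i+1)‖^2 := by
  obtain ⟨m, rfl⟩ : ∃ m, K = m + 1 := ⟨K - 1, by omega⟩
  simp only [Nat.add_sub_cancel]
  have h1 : ∑ i ∈ Finset.range (m+1), ‖b (i+1) - b i‖^2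
      ≤ ∑ i ∈ Finset.range (m+1), (2*‖b (i+1)‖^2 + 2*‖b i‖^2) :=
    Finset.sum_le_sum fun i _ => sq_norm_sub_le _ _
  have h2 : ∑ i ∈ Finset.range (m+1), (2*‖b (i+1)‖^2 + 2*‖b i‖^2)
      = 2*∑ i ∈ Finset.range (m+1), ‖b (i+1)‖^2 + 2*∑ i ∈ Finset.range (m+1), ‖b i‖^2 := by
    rw [Finset.sum_add_distrib, ← Finset.mul_sum, ← Finset.mul_sum]
  have h3 : ∑ i ∈ Finset.range (m+1), ‖b (i+1)‖^2 = ∑ i ∈ Finset.range m, ‖b (i+1)‖^2 := by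
    rw [Finset.sum_range_succ, hKz]
    simp
  have h4 : ∑ i ∈ Finset.range (m+1), ‖b i‖^2 = ∑ i ∈ Finset.range m, ‖b (i+1)‖^2 := by
    rw [Finset.sum_range_succ' (fun i => ‖b i‖^2) m, h0]
    simp
  linarith

lemma sum_Icc_one {M : Type*} [AddCommMonoid M] (n : ℕ) (g : ℕ → M) :
    ∑ k ∈ Finset.Icc 1 (n+1), g k = ∑ i ∈ Finset.range (n+1), g (i+1) := by
  rw [← Finset.Ico_add_one_right_eq_Icc, Finset.sum_Ico_eq_sum_range]
  exact Finset.sum_congr (by norm_num) fun i _ => by rw [Nat.add_comm]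

set_option maxHeartbeats 1600000 in
/-- for every `W ∈ H_h`, the inner products `(s_{Nx}W, W)` and `(s_{Ny}W, W)`
are real and are bounded below by `(2/3)‖W‖²`. -/
theorem stmt0 (K : ℕ) (hK : 2 ≤ K) (hx hy : ℝ) (hhx : 0 < hx) (hhy : 0 < hy)
    (W : ℕ → ℕ → ℂ) (hW : memH K W) :
    (innH K hx hy (sNx K hx W) W).im = 0 ∧
    (innH K hx hy (sNy K hy W) W).im = 0 ∧
    2 / 3 * (innH K hx hy W W).re ≤ (innH K hx hy (sNx K hx W) W).re ∧
    2 / 3 * (innH K hx hy W W).re ≤ (innH K hx hy (sNy K hy W) W).re := by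
  obtain ⟨hW0, hWj0, hWjK, hsum⟩ := hW
  obtain ⟨m, rfl⟩ : ∃ m, K = m + 2 := ⟨K - 2, by omega⟩
  set c : ℝ := hx * hy with hc
  have hcpos : 0 < c := mul_pos hhx hhy
  have hKm : m + 2 - 1 = m + 1 := by omega
  have hsumIcc : Summable fun j => ∑ k ∈ Finset.Icc 1 (m+1), ‖W j k‖^2 := by
    simpa [hKm] using hsum
  set G : ℕ → ℝ := fun j => ∑ i ∈ Finset.range (m+1), ‖W (j+1) (i+1)‖^2 with hGdef
  have hG : Summable G := by
    have h1 : Summable fun j => ∑ k ∈ Finset.Icc 1 (m+1), ‖W (j+1) k‖^2 :=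
      (summable_nat_add_iff (f := fun j => ∑ k ∈ Finset.Icc 1 (m+1), ‖W j k‖^2) 1).2 hsumIcc
    have h2 : G = fun j => ∑ k ∈ Finset.Icc 1 (m+1), ‖W (j+1) k‖^2 :=
      funext fun j => (sum_Icc_one m (fun k => ‖W (j+1) k‖^2)).symm
    rw [h2]; exact h1
  have hks : ∀ i, i < m + 1 → Summable fun j => ‖W j (i+1)‖^2 := by
    intro i hi
    apply Summable.of_nonneg_of_le (fun j => sq_nonneg _) (fun j => ?_) hsumIcc
    exact Finset.single_le_sum (f := fun k => ‖W j k‖^2) (fun k _ => sq_nonneg _)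
      (Finset.mem_Icc.mpr ⟨by omega, by omega⟩)
  have hks1 : ∀ i, i < m + 1 → Summable fun j => ‖W (j+1) (i+1)‖^2 := fun i hi =>
    (summable_nat_add_iff (f := fun j => ‖W j (i+1)‖^2) 1).2 (hks i hi)
  set N : ℝ := ∑' j, G j with hN
  -- innH W W
  have hAterm : ∀ j, ∑ i ∈ Finset.range (m+1),
      W (j+1) (i+1) * (starRingEnd ℂ) (W (j+1) (i+1)) * ((c : ℝ) : ℂ)
      = ((G j * c : ℝ) : ℂ) := by
    intro j
    rw [hGdef]
    push_cast [Finset.sum_mul]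
    exact Finset.sum_congr rfl fun i _ => by rw [mul_conj_self']
  have hAHasSum : HasSum (fun j => ∑ i ∈ Finset.range (m+1),
      W (j+1) (i+1) * (starRingEnd ℂ) (W (j+1) (i+1)) * ((c : ℝ) : ℂ)) (((N * c : ℝ)) : ℂ) := by
    have h1 : HasSum (fun j => ((G j * c : ℝ) : ℂ)) (((N * c : ℝ)) : ℂ) :=
      Complex.hasSum_ofReal.2 ((hG.hasSum).mul_right c)
    have h2 : (fun j => ∑ i ∈ Finset.range (m+1),
        W (j+1) (i+1) * (starRingEnd ℂ) (W (j+1) (i+1)) * ((c : ℝ) : ℂ))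
        = fun j => ((G j * c : ℝ) : ℂ) := funext fun j => hAterm j
    rw [h2]; exact h1
  have hInnW : innH (m+2) hx hy W W = (((N * c : ℝ)) : ℂ) := by
    rw [innH, ← hc, ← hAHasSum.tsum_eq]
    exact tsum_congr fun j => by
      rw [hKm, sum_Icc_one m
        (fun k => W (j+1) k * (starRingEnd ℂ) (W (j+1) k) * ((c : ℝ) : ℂ))]
  -- X part
  set SX : ℕ → ℝ := fun i => ∑' j, ‖W (j+1) (i+1) - W j (i+1)‖^2 with hSX
  have hXi : ∀ i, i < m+1 → HasSum
      (fun j => sNx (m+2) hx W (j+1) (i+1) * (starRingEnd ℂ) (W (j+1) (i+1)) * ((c : ℝ) : ℂ))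
      (((((∑' j, ‖W (j+1) (i+1)‖^2) * c : ℝ)) : ℂ)
        + (-((SX i : ℝ) : ℂ)) * (((c : ℝ) : ℂ)/12)) := by
    intro i hi
    have hAi : HasSum (fun j => W (j+1) (i+1) * (starRingEnd ℂ) (W (j+1) (i+1)) * ((c : ℝ) : ℂ))
        ((((∑' j, ‖W (j+1) (i+1)‖^2) * c : ℝ)) : ℂ) := by
      have h1 : HasSum (fun j => ((‖W (j+1) (i+1)‖^2 * c : ℝ) : ℂ))
          ((((∑' j, ‖W (j+1) (i+1)‖^2) * c : ℝ)) : ℂ) :=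
        Complex.hasSum_ofReal.2 (((hks1 i hi).hasSum).mul_right c)
      have h2 : (fun j => W (j+1) (i+1) * (starRingEnd ℂ) (W (j+1) (i+1)) * ((c : ℝ) : ℂ))
          = fun j => ((‖W (j+1) (i+1)‖^2 * c : ℝ) : ℂ) := by
        funext j
        rw [mul_conj_self']
        push_cast
        ring
      rw [h2]; exact h1
    have hBi := (keyX (a := fun j => W j (i+1)) (hW0 (i+1)) (hks i hi)).mul_right
      ((((c : ℝ)) : ℂ)/12)
    have h2 := hAi.add hBi
    have hfe : (fun j => sNx (m+2) hx W (j+1) (i+1) * (starRingEnd ℂ) (W (j+1) (i+1))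
          * ((c : ℝ) : ℂ))
        = fun j => W (j+1) (i+1) * (starRingEnd ℂ) (W (j+1) (i+1)) * ((c : ℝ) : ℂ)
          + (W (j+2) (i+1) - 2*W (j+1) (i+1) + W j (i+1)) * (starRingEnd ℂ) (W (j+1) (i+1))
            * ((((c : ℝ)) : ℂ)/12) := by
      funext j
      have hxne : ((hx : ℂ))^2 ≠ 0 := pow_ne_zero _ (Complex.ofReal_ne_zero.2 hhx.ne')
      simp only [sNx, ddx]
      rw [if_neg (by push_neg; exact ⟨by omega, by omega, by omega⟩)]
      have e1 : j + 1 + 1 = j + 2 := by omega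
      have e2 : j + 1 - 1 = j := by omega
      rw [e1, e2]
      have e3 : ((hx ^ 2 / 12 : ℝ) : ℂ) = ((hx : ℂ))^2 / 12 := by push_cast; ring
      rw [e3]
      have hx0 : (hx : ℂ) ≠ 0 := Complex.ofReal_ne_zero.2 hhx.ne'
      have hy0 : (hy : ℂ) ≠ 0 := Complex.ofReal_ne_zero.2 hhy.ne'
      field_simp
    rw [hfe]
    exact h2
  have hXHasSum : HasSum
      (fun j => ∑ i ∈ Finset.range (m+1),
        sNx (m+2) hx W (j+1) (i+1) * (starRingEnd ℂ) (W (j+1) (i+1)) * ((c : ℝ) : ℂ))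
      (∑ i ∈ Finset.range (m+1), ((((∑' j, ‖W (j+1) (i+1)‖^2) * c : ℝ) : ℂ)
        + (-((SX i : ℝ) : ℂ)) * (((c : ℝ) : ℂ)/12))) :=
    hasSum_sum (fun i hi => hXi i (Finset.mem_range.mp hi))
  have hNsplit : N = ∑ i ∈ Finset.range (m+1), ∑' j, ‖W (j+1) (i+1)‖^2 := by
    rw [hN, hGdef]
    exact Summable.tsum_finsetSum (fun i hi => hks1 i (Finset.mem_range.mp hi))
  have hXval : ∑ i ∈ Finset.range (m+1), ((((∑' j, ‖W (j+1) (i+1)‖^2) * c : ℝ) : ℂ)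
        + (-((SX i : ℝ) : ℂ)) * (((c : ℝ) : ℂ)/12))
      = ((N * c - c/12 * ∑ i ∈ Finset.range (m+1), SX i : ℝ) : ℂ) := by
    have h1 : ∀ i ∈ Finset.range (m+1), ((((∑' j, ‖W (j+1) (i+1)‖^2) * c : ℝ) : ℂ)
          + (-((SX i : ℝ) : ℂ)) * (((c : ℝ) : ℂ)/12))
        = (((∑' j, ‖W (j+1) (i+1)‖^2) : ℝ) : ℂ) * ((c : ℝ) : ℂ)
          - ((c : ℝ) : ℂ)/12 * ((SX i : ℝ) : ℂ) := by
      intro i _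
      push_cast
      ring
    rw [Finset.sum_congr rfl h1, Finset.sum_sub_distrib, ← Finset.sum_mul, ← Finset.mul_sum]
    rw [hNsplit]
    push_cast
    ring
  have hInnX : innH (m+2) hx hy (sNx (m+2) hx W) W
      = ((N * c - c/12 * ∑ i ∈ Finset.range (m+1), SX i : ℝ) : ℂ) := by
    rw [innH, ← hc, ← hXval, ← hXHasSum.tsum_eq]
    exact tsum_congr fun j => by
      rw [hKm, sum_Icc_one m
        (fun k => sNx (m+2) hx W (j+1) k * (starRingEnd ℂ) (W (j+1) k) * ((c : ℝ) : ℂ))]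
  have hSXbound : ∑ i ∈ Finset.range (m+1), SX i ≤ 4 * N := by
    rw [hNsplit, Finset.mul_sum]
    apply Finset.sum_le_sum
    intro i hi
    have hb := boundX (a := fun j => W j (i+1)) (hW0 (i+1)) (hks i (Finset.mem_range.mp hi))
    simpa [hSX] using hb
  -- Y part
  set RY : ℕ → ℝ := fun j => ∑ i ∈ Finset.range (m+2), ‖W (j+1) (i+1) - W (j+1) i‖^2 with hRY
  have hRYnonneg : ∀ j, 0 ≤ RY j := fun j => Finset.sum_nonneg fun i _ => sq_nonneg _
  have hRYle : ∀ j, RY j ≤ 4 * G j := by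
    intro j
    have h := boundY (b := W (j+1)) (K := m+2) (by omega) (hWj0 (j+1)) (hWjK (j+1))
    rw [hKm] at h
    exact h
  have hRYsum : Summable RY :=
    Summable.of_nonneg_of_le hRYnonneg hRYle (hG.mul_left 4)
  have hYterm : ∀ j, ∑ i ∈ Finset.range (m+1),
      sNy (m+2) hy W (j+1) (i+1) * (starRingEnd ℂ) (W (j+1) (i+1)) * ((c : ℝ) : ℂ)
      = ((G j * c - c/12 * RY j : ℝ) : ℂ) := by
    intro j
    have hfe : ∀ i ∈ Finset.range (m+1),
        sNy (m+2) hy W (j+1) (i+1) * (starRingEnd ℂ) (W (j+1) (i+1)) * ((c : ℝ) : ℂ)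
        = W (j+1) (i+1) * (starRingEnd ℂ) (W (j+1) (i+1)) * ((c : ℝ) : ℂ)
          + (W (j+1) (i+2) - 2*W (j+1) (i+1) + W (j+1) i) * (starRingEnd ℂ) (W (j+1) (i+1))
            * ((((c : ℝ)) : ℂ)/12) := by
      intro i hi
      have hi' : i < m + 1 := Finset.mem_range.mp hi
      have hyne : ((hy : ℂ))^2 ≠ 0 := pow_ne_zero _ (Complex.ofReal_ne_zero.2 hhy.ne')
      simp only [sNy, ddy]
      rw [if_neg (by push_neg; exact ⟨by omega, by omega, by omega⟩)]
      have e1 : i + 1 + 1 = i + 2 := by omega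
      have e2 : i + 1 - 1 = i := by omega
      rw [e1, e2]
      have e3 : ((hy ^ 2 / 12 : ℝ) : ℂ) = ((hy : ℂ))^2 / 12 := by push_cast; ring
      rw [e3]
      have hx0 : (hx : ℂ) ≠ 0 := Complex.ofReal_ne_zero.2 hhx.ne'
      have hy0 : (hy : ℂ) ≠ 0 := Complex.ofReal_ne_zero.2 hhy.ne'
      field_simp
    rw [Finset.sum_congr rfl hfe, Finset.sum_add_distrib, hAterm j]
    have hB : ∑ i ∈ Finset.range (m+1),
        (W (j+1) (i+2) - 2*W (j+1) (i+1) + W (j+1) i) * (starRingEnd ℂ) (W (j+1) (i+1))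
          * ((((c : ℝ)) : ℂ)/12)
        = (-((RY j : ℝ) : ℂ)) * ((((c : ℝ)) : ℂ)/12) := by
      rw [← Finset.sum_mul]
      have hkY := keyY (b := W (j+1)) (K := m+2) (by omega) (hWj0 (j+1)) (hWjK (j+1))
      rw [hKm] at hkY
      rw [hkY, hRY]
    rw [hB]
    push_cast
    ring
  have hInnY : innH (m+2) hx hy (sNy (m+2) hy W) W
      = ((N * c - c/12 * ∑' j, RY j : ℝ) : ℂ) := by
    rw [innH, ← hc]
    have h1 : ∀ j, ∑ k ∈ Finset.Icc 1 (m+2-1),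
        sNy (m+2) hy W (j+1) k * (starRingEnd ℂ) (W (j+1) k) * ((c : ℝ) : ℂ)
        = ((G j * c - c/12 * RY j : ℝ) : ℂ) := by
      intro j
      rw [hKm, sum_Icc_one m
        (fun k => sNy (m+2) hy W (j+1) k * (starRingEnd ℂ) (W (j+1) k) * ((c : ℝ) : ℂ))]
      exact hYterm j
    rw [tsum_congr h1, ← Complex.ofReal_tsum]
    congr 1
    rw [Summable.tsum_sub (hG.mul_right c) (hRYsum.mul_left (c/12)), tsum_mul_right, tsum_mul_left]
  have hSYbound : ∑' j, RY j ≤ 4 * N := by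
    calc ∑' j, RY j ≤ ∑' j, 4 * G j := Summable.tsum_le_tsum hRYle hRYsum (hG.mul_left 4)
      _ = 4 * N := by rw [tsum_mul_left]
  -- conclusion
  refine ⟨?_, ?_, ?_, ?_⟩
  · rw [hInnX]; exact Complex.ofReal_im _
  · rw [hInnY]; exact Complex.ofReal_im _
  · rw [hInnX, hInnW, Complex.ofReal_re, Complex.ofReal_re]
    have h1 : c/12 * (∑ i ∈ Finset.range (m+1), SX i) ≤ c/12 * (4*N) :=
      mul_le_mul_of_nonneg_left hSXbound (by positivity)
    have h2 : c/12 * (4*N) = N * c / 3 := by ring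
    linarith
  · rw [hInnY, hInnW, Complex.ofReal_re, Complex.ofReal_re]
    have h1 : c/12 * (∑' j, RY j) ≤ c/12 * (4*N) :=
      mul_le_mul_of_nonneg_left hSYbound (by positivity)
    have h2 : c/12 * (4*N) = N * c / 3 := by ring
    linarith
end
end

section
/- The bounded linear operator s_N : H_h -> H_h is bijective, and its inverse is bounded with operator norm at most 3; equivalently, for every W in H_h one has ||W||_{H_h} <= 3*||s_N W||_{H_h}, and for every F in H_h there is a unique W in H_h with s_N W = F. -/
noncomputable section

/-- The full Numerov average `s_N = I + (h_x^2/12) ∂_x ∂̄_x + (h_y^2/12) ∂_y ∂̄_y`. -/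
def sN (K : ℕ) (hx hy : ℝ) (W : ℕ → ℕ → ℂ) : ℕ → ℕ → ℂ := fun j k =>
  W j k + ((hx ^ 2 / 12 : ℝ) : ℂ) * ddx K hx W j k + ((hy ^ 2 / 12 : ℝ) : ℂ) * ddy K hy W j k

/-- The Numerov discretization `Δ_{hN} = s_{Ny} ∂_x ∂̄_x + s_{Nx} ∂_y ∂̄_y` of the Laplacian. -/
def deltaHN (K : ℕ) (hx hy : ℝ) (W : ℕ → ℕ → ℂ) : ℕ → ℕ → ℂ := fun j k =>
  sNy K hy (ddx K hx W) j k + sNx K hx (ddy K hy W) j k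

/-- The norm `‖W‖_{H_h}`. -/
def nrmH (K : ℕ) (hx hy : ℝ) (W : ℕ → ℕ → ℂ) : ℝ :=
  Real.sqrt (innH K hx hy W W).re


namespace S2

open scoped ENNReal

abbrev ι' := ℕ × ℕ
abbrev E' := lp (fun _ : ι' => ℂ) 2
instance : Fact ((1:ℝ≥0∞) ≤ 2) := ⟨one_le_two⟩

def msk (K : ℕ) (p : ι') : Prop := p.1 = 0 ∨ p.2 = 0 ∨ K ≤ p.2
instance (K : ℕ) : DecidablePred (msk K) := fun p => by unfold msk; infer_instance

def emb (K : ℕ) (W : ℕ → ℕ → ℂ) : ι' → ℂ := fun p => if msk K p then 0 else W p.1 p.2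

def A0 (K : ℕ) (f : ι' → ℂ) : ι' → ℂ := fun p =>
  if msk K p then 0
  else (1/12 : ℂ) * (f (p.1+1, p.2) + f (p.1-1, p.2) + f (p.1, p.2+1) + f (p.1, p.2-1) - 4 * f p)

def mshift (K : ℕ) (σ : ι' → ι') (f : ι' → ℂ) : ι' → ℂ := fun p =>
  if msk K p then 0 else f (σ p)

lemma shift_bound (K : ℕ) (g : ι' → ℝ) (hg0 : ∀ p, 0 ≤ g p) (hg : Summable g) (σ : ι' → ι')
    (hσ : ∀ p q : ι', ¬ msk K p → ¬ msk K q → σ p = σ q → p = q) :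
    Summable (fun p => if msk K p then 0 else g (σ p)) ∧
    ∑' p, (if msk K p then 0 else g (σ p)) ≤ ∑' p, g p := by
  set S : Set ι' := {p | ¬ msk K p} with hS
  set h : ι' → ℝ := fun p => if msk K p then 0 else g (σ p) with hh
  have hind : h = S.indicator (fun p => g (σ p)) := by
    funext p
    by_cases hp : msk K p <;> simp [hh, hS, Set.indicator_apply, hp]
  have hi : Function.Injective (fun x : S => σ x.val) := by
    intro x y hxy
    exact Subtype.ext (hσ _ _ x.2 y.2 hxy)
  have hsum : Summable ((fun p => g (σ p)) ∘ ((↑) : S → ι')) := hg.comp_injective hi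
  have hsummable : Summable h := by
    rw [hind, ← summable_subtype_iff_indicator]
    exact hsum
  constructor
  · exact hsummable
  · have h1 : ∑' p, h p = ∑' x : S, h x := (tsum_subtype_eq_of_support_subset (by
      intro p hp
      simp only [Function.mem_support, hh] at hp
      by_contra hps
      simp only [hS, Set.mem_setOf_eq, not_not] at hps
      exact hp (if_pos hps))).symm
    have h2 : ∀ x : S, h x = g (σ x.val) := fun x => if_neg x.2
    rw [h1, tsum_congr h2]
    exact tsum_comp_le_tsum_of_inj hg hg0 hi

lemma rp2 (x : ℝ) : x ^ (2:ℝ≥0∞).toReal = x ^ 2 := by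
  rw [ENNReal.toReal_ofNat, show ((2:ℝ)) = ((2:ℕ):ℝ) by norm_num, Real.rpow_natCast]

lemma summable_sq_of_lp (f : E') : Summable fun p : ι' => ‖(f : ι' → ℂ) p‖^2 := by
  have := (lp.memℓp f)
  rw [memℓp_gen_iff (by norm_num)] at this
  exact this.congr fun p => rp2 _

lemma memℓp_of_summable_sq {f : ι' → ℂ} (h : Summable fun p => ‖f p‖^2) : Memℓp f 2 :=
  memℓp_gen (by exact h.congr fun p => (rp2 _).symm)

lemma mem_Icc_iff {K k : ℕ} : k ∈ Finset.Icc 1 (K-1) ↔ ¬(k = 0 ∨ K ≤ k) := by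
  rw [Finset.mem_Icc]; omega

lemma not_mem_Icc {K k : ℕ} (hk : k ∉ Finset.Icc 1 (K-1)) : k = 0 ∨ K ≤ k := by
  by_contra h; exact hk (mem_Icc_iff.mpr h)

lemma emb_msk (K : ℕ) (W : ℕ → ℕ → ℂ) : ∀ p, msk K p → emb K W p = 0 := fun _ hp => if_pos hp

lemma row_sum_emb {K : ℕ} {W : ℕ → ℕ → ℂ} (h0 : ∀ k, W 0 k = 0) (j : ℕ) :
    ∑ k ∈ Finset.Icc 1 (K-1), ‖emb K W (j,k)‖^2 = ∑ k ∈ Finset.Icc 1 (K-1), ‖W j k‖^2 := by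
  refine Finset.sum_congr rfl fun k hk => ?_
  have hm : ¬(k = 0 ∨ K ≤ k) := mem_Icc_iff.mp hk
  by_cases hj : j = 0
  · subst hj; simp [emb, msk, h0]
  · rw [emb, if_neg]; simp [msk, hj, hm]

lemma tsum_row {K : ℕ} {f : ι' → ℂ} (hf : ∀ p, msk K p → f p = 0) (j : ℕ) :
    ∑' k, ‖f (j, k)‖^2 = ∑ k ∈ Finset.Icc 1 (K-1), ‖f (j, k)‖^2 := by
  refine tsum_eq_sum fun k hk => ?_
  rw [hf (j,k) (Or.inr (not_mem_Icc hk))]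
  simp

lemma summable_row {K : ℕ} {f : ι' → ℂ} (hf : ∀ p, msk K p → f p = 0) (j : ℕ) :
    Summable fun k => ‖f (j, k)‖^2 := by
  apply summable_of_ne_finset_zero (s := Finset.Icc 1 (K-1))
  intro k hk
  rw [hf (j,k) (Or.inr (not_mem_Icc hk))]
  simp

lemma summable_sq_of_vanish {K : ℕ} {f : ι' → ℂ} (hf : ∀ p, msk K p → f p = 0)
    (hrow : Summable fun j : ℕ => ∑ k ∈ Finset.Icc 1 (K-1), ‖f (j,k)‖ ^ 2) :
    Summable fun p : ι' => ‖f p‖^2 := by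
  rw [summable_prod_of_nonneg (fun p => sq_nonneg _)]
  exact ⟨summable_row hf, by
    apply Summable.congr hrow
    intro j
    exact (tsum_row hf j).symm⟩

lemma summable_emb {K : ℕ} {W : ℕ → ℕ → ℂ} (hW : memH K W) :
    Summable fun p : ι' => ‖emb K W p‖^2 := by
  apply summable_sq_of_vanish (emb_msk K W)
  apply Summable.congr hW.2.2.2
  intro j
  exact (row_sum_emb hW.1 j).symm

lemma rows_summable_of_sq {K : ℕ} {f : ι' → ℂ} (hf : ∀ p, msk K p → f p = 0)
    (h : Summable fun p : ι' => ‖f p‖^2) :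
    Summable fun j : ℕ => ∑ k ∈ Finset.Icc 1 (K-1), ‖f (j,k)‖ ^ 2 := by
  have := ((summable_prod_of_nonneg (fun p => sq_nonneg ‖f p‖)).mp h).2
  apply Summable.congr this
  intro j
  exact tsum_row hf j

lemma tsum_sq_prod {K : ℕ} {f : ι' → ℂ} (hf : ∀ p, msk K p → f p = 0)
    (h : Summable fun p : ι' => ‖f p‖^2) :
    ∑' p : ι', ‖f p‖^2 = ∑' j : ℕ, ∑ k ∈ Finset.Icc 1 (K-1), ‖f (j,k)‖ ^ 2 := by
  rw [h.tsum_prod]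
  exact tsum_congr fun j => tsum_row hf j

lemma norm_mshift_sq (K : ℕ) (σ : ι' → ι') (f : ι' → ℂ) (p : ι') :
    ‖mshift K σ f p‖^2 = if msk K p then 0 else ‖f (σ p)‖^2 := by
  unfold mshift; split_ifs <;> simp

def σ1 : ι' → ι' := fun p => (p.1+1, p.2)
def σ2 : ι' → ι' := fun p => (p.1-1, p.2)
def σ3 : ι' → ι' := fun p => (p.1, p.2+1)
def σ4 : ι' → ι' := fun p => (p.1, p.2-1)

lemma σ_inj (K : ℕ) (σ : ι' → ι') (hσ : σ = σ1 ∨ σ = σ2 ∨ σ = σ3 ∨ σ = σ4 ∨ σ = id) :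
    ∀ p q : ι', ¬ msk K p → ¬ msk K q → σ p = σ q → p = q := by
  intro p q hp hq h
  simp only [msk, not_or, not_le] at hp hq
  obtain ⟨hp1, hp2, hp3⟩ := hp; obtain ⟨hq1, hq2, hq3⟩ := hq
  rcases hσ with rfl|rfl|rfl|rfl|rfl <;>
    [skip; skip; skip; skip; exact h] <;>
  · simp only [σ1, σ2, σ3, σ4, Prod.mk.injEq, Prod.ext_iff] at h ⊢
    omega

lemma memℓp_mshift (K : ℕ) (σ : ι' → ι')
    (hσ : ∀ p q : ι', ¬ msk K p → ¬ msk K q → σ p = σ q → p = q)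
    (f : E') : Memℓp (mshift K σ f) 2 := by
  apply memℓp_of_summable_sq
  have hsf := summable_sq_of_lp f
  have := (shift_bound K (fun p => ‖(f : ι' → ℂ) p‖^2) (fun p => sq_nonneg _) hsf σ hσ).1
  apply Summable.congr this
  intro p
  rw [norm_mshift_sq]

lemma norm_sq_E (e : E') : ‖e‖^2 = ∑' p, ‖(e : ι' → ℂ) p‖^2 := by
  have h := lp.norm_rpow_eq_tsum (p := 2) (by norm_num) e
  rw [rp2] at h
  rw [h]
  exact tsum_congr fun p => rp2 _

lemma norm_le_of_sq_le {e₁ e₂ : E'}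
    (h : ∑' p, ‖(e₁ : ι' → ℂ) p‖^2 ≤ ∑' p, ‖(e₂ : ι' → ℂ) p‖^2) : ‖e₁‖ ≤ ‖e₂‖ := by
  have h1 := norm_sq_E e₁; have h2 := norm_sq_E e₂
  nlinarith [norm_nonneg e₁, norm_nonneg e₂]

def Mshift (K : ℕ) (σ : ι' → ι')
    (hσ : ∀ p q : ι', ¬ msk K p → ¬ msk K q → σ p = σ q → p = q) (f : E') : E' :=
  ⟨mshift K σ f, memℓp_mshift K σ hσ f⟩

lemma norm_Mshift_le (K : ℕ) (σ : ι' → ι')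
    (hσ : ∀ p q : ι', ¬ msk K p → ¬ msk K q → σ p = σ q → p = q) (f : E') :
    ‖Mshift K σ hσ f‖ ≤ ‖f‖ := by
  apply norm_le_of_sq_le
  have hb := (shift_bound K (fun p => ‖(f : ι' → ℂ) p‖^2) (fun p => sq_nonneg _)
    (summable_sq_of_lp f) σ hσ).2
  calc ∑' p, ‖(Mshift K σ hσ f : ι' → ℂ) p‖^2
      = ∑' p, (if msk K p then 0 else ‖(f : ι' → ℂ) (σ p)‖^2) :=
        tsum_congr fun p => norm_mshift_sq K σ _ p
    _ ≤ ∑' p, ‖(f : ι' → ℂ) p‖^2 := hb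

lemma memℓp_A0 (K : ℕ) (f : E') : Memℓp (A0 K (f : ι' → ℂ)) 2 := by
  have h1 := memℓp_mshift K σ1 (σ_inj K σ1 (Or.inl rfl)) f
  have h2 := memℓp_mshift K σ2 (σ_inj K σ2 (Or.inr (Or.inl rfl))) f
  have h3 := memℓp_mshift K σ3 (σ_inj K σ3 (Or.inr (Or.inr (Or.inl rfl)))) f
  have h4 := memℓp_mshift K σ4 (σ_inj K σ4 (Or.inr (Or.inr (Or.inr (Or.inl rfl))))) f
  have h0 := memℓp_mshift K id (σ_inj K id (Or.inr (Or.inr (Or.inr (Or.inr rfl))))) f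
  have : A0 K (f : ι' → ℂ) = (1/12 : ℂ) • (mshift K σ1 f + mshift K σ2 f + mshift K σ3 f
      + mshift K σ4 f - (4:ℂ) • mshift K id f) := by
    funext p
    simp only [A0, mshift, σ1, σ2, σ3, σ4, Pi.smul_apply, Pi.add_apply, Pi.sub_apply,
      smul_eq_mul, id]
    split_ifs <;> ring
  rw [this]
  exact ((((h1.add h2).add h3).add h4).sub (h0.const_smul (4:ℂ))).const_smul ((1:ℂ)/12)

def AE (K : ℕ) (f : E') : E' := ⟨A0 K (f : ι' → ℂ), memℓp_A0 K f⟩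

lemma AE_decomp (K : ℕ) (f : E') : (AE K f : E') = (1/12 : ℂ) •
    (Mshift K σ1 (σ_inj K σ1 (Or.inl rfl)) f
    + Mshift K σ2 (σ_inj K σ2 (Or.inr (Or.inl rfl))) f
    + Mshift K σ3 (σ_inj K σ3 (Or.inr (Or.inr (Or.inl rfl)))) f
    + Mshift K σ4 (σ_inj K σ4 (Or.inr (Or.inr (Or.inr (Or.inl rfl))))) f
    - (4:ℂ) • Mshift K id (σ_inj K id (Or.inr (Or.inr (Or.inr (Or.inr rfl))))) f) := by
  apply lp.ext
  rw [lp.coeFn_smul, lp.coeFn_sub, lp.coeFn_add, lp.coeFn_add, lp.coeFn_add, lp.coeFn_smul]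
  funext p
  simp only [AE, Mshift, A0, mshift, σ1, σ2, σ3, σ4, Pi.smul_apply, Pi.add_apply, Pi.sub_apply,
    smul_eq_mul, id]
  split_ifs <;> ring

lemma norm_AE_le (K : ℕ) (f : E') : ‖AE K f‖ ≤ (2/3 : ℝ) * ‖f‖ := by
  rw [AE_decomp]
  have e1 := norm_Mshift_le K σ1 (σ_inj K σ1 (Or.inl rfl)) f
  have e2 := norm_Mshift_le K σ2 (σ_inj K σ2 (Or.inr (Or.inl rfl))) f
  have e3 := norm_Mshift_le K σ3 (σ_inj K σ3 (Or.inr (Or.inr (Or.inl rfl)))) f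
  have e4 := norm_Mshift_le K σ4 (σ_inj K σ4 (Or.inr (Or.inr (Or.inr (Or.inl rfl))))) f
  have e0 := norm_Mshift_le K id (σ_inj K id (Or.inr (Or.inr (Or.inr (Or.inr rfl))))) f
  set M1 := Mshift K σ1 (σ_inj K σ1 (Or.inl rfl)) f
  set M2 := Mshift K σ2 (σ_inj K σ2 (Or.inr (Or.inl rfl))) f
  set M3 := Mshift K σ3 (σ_inj K σ3 (Or.inr (Or.inr (Or.inl rfl)))) f
  set M4 := Mshift K σ4 (σ_inj K σ4 (Or.inr (Or.inr (Or.inr (Or.inl rfl))))) f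
  set M0 := Mshift K id (σ_inj K id (Or.inr (Or.inr (Or.inr (Or.inr rfl))))) f
  have hns : ‖(1/12 : ℂ)‖ = 1/12 := by
    rw [show (1/12 : ℂ) = ((1/12 : ℝ) : ℂ) by norm_num, Complex.norm_real]
    norm_num
  rw [norm_smul, hns]
  have h4 : ‖(4:ℂ) • M0‖ = 4 * ‖M0‖ := by
    rw [norm_smul, show ‖(4:ℂ)‖ = 4 by
      rw [show (4 : ℂ) = ((4 : ℝ) : ℂ) by norm_num, Complex.norm_real]; norm_num]
  calc (1/12 : ℝ) * ‖M1 + M2 + M3 + M4 - (4:ℂ) • M0‖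
      ≤ (1/12 : ℝ) * (‖M1‖ + ‖M2‖ + ‖M3‖ + ‖M4‖ + ‖(4:ℂ) • M0‖) := by
        gcongr
        calc ‖M1 + M2 + M3 + M4 - (4:ℂ) • M0‖ ≤ ‖M1 + M2 + M3 + M4‖ + ‖(4:ℂ) • M0‖ :=
              norm_sub_le _ _
          _ ≤ ‖M1‖ + ‖M2‖ + ‖M3‖ + ‖M4‖ + ‖(4:ℂ) • M0‖ := by
              have h12 := norm_add_le (M1 + M2 + M3) M4
              have h123 := norm_add_le (M1 + M2) M3
              have h1234 := norm_add_le M1 M2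
              linarith
    _ ≤ (1/12 : ℝ) * (‖f‖ + ‖f‖ + ‖f‖ + ‖f‖ + 4 * ‖f‖) := by
        rw [h4]; gcongr
    _ = (2/3 : ℝ) * ‖f‖ := by ring

lemma AE_coe (K : ℕ) (f : E') : (AE K f : ι' → ℂ) = A0 K (f : ι' → ℂ) := rfl

def Alin (K : ℕ) : E' →ₗ[ℂ] E' where
  toFun := AE K
  map_add' f g := by
    apply lp.ext
    rw [lp.coeFn_add, AE_coe, AE_coe, AE_coe, lp.coeFn_add]
    funext p
    simp only [A0, Pi.add_apply]
    split_ifs <;> ring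
  map_smul' c f := by
    apply lp.ext
    rw [AE_coe, lp.coeFn_smul, lp.coeFn_smul, AE_coe]
    funext p
    simp only [A0, Pi.smul_apply, smul_eq_mul, RingHom.id_apply]
    split_ifs <;> ring

def Aclm (K : ℕ) : E' →L[ℂ] E' := LinearMap.mkContinuous (Alin K) (2/3) (norm_AE_le K)

lemma Aclm_coe (K : ℕ) (f : E') : (Aclm K f : ι' → ℂ) = A0 K (f : ι' → ℂ) := rfl

lemma norm_Aclm_le (K : ℕ) : ‖Aclm K‖ ≤ 2/3 :=
  LinearMap.mkContinuous_norm_le _ (by norm_num) _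

def uN (K : ℕ) : (E' →L[ℂ] E')ˣ := Units.oneSub (-(Aclm K)) (by
  rw [norm_neg]
  exact lt_of_le_of_lt (norm_Aclm_le K) (by norm_num))

lemma uN_val (K : ℕ) : (uN K : E' →L[ℂ] E') = 1 + Aclm K := by
  show 1 - -(Aclm K) = 1 + Aclm K
  rw [sub_neg_eq_add]

lemma uN_apply (K : ℕ) (f : E') : (uN K : E' →L[ℂ] E') f = f + Aclm K f := by
  rw [uN_val]; rfl

lemma norm_le_three (K : ℕ) (f : E') : ‖f‖ ≤ 3 * ‖(uN K : E' →L[ℂ] E') f‖ := by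
  have h1 : ‖f‖ ≤ ‖(uN K : E' →L[ℂ] E') f‖ + ‖Aclm K f‖ := by
    calc ‖f‖ = ‖((uN K : E' →L[ℂ] E') f) - Aclm K f‖ := by rw [uN_apply]; congr 1; abel
      _ ≤ _ := norm_sub_le _ _
  have h2 : ‖Aclm K f‖ ≤ (2/3) * ‖f‖ := norm_AE_le K f
  linarith

lemma uN_coe (K : ℕ) (f : E') :
    (((uN K : E' →L[ℂ] E') f) : ι' → ℂ) = fun p => (f : ι' → ℂ) p + A0 K (f : ι' → ℂ) p := by
  rw [uN_apply, lp.coeFn_add, Aclm_coe]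
  rfl

lemma emb_sN (K : ℕ) (hx hy : ℝ) (hhx : hx ≠ 0) (hhy : hy ≠ 0) {W : ℕ → ℕ → ℂ}
    (h0 : ∀ k, W 0 k = 0) (hb0 : ∀ j, W j 0 = 0) (hbK : ∀ j, W j K = 0) :
    emb K (sN K hx hy W) = fun p => emb K W p + A0 K (emb K W) p := by
  funext p
  obtain ⟨j, k⟩ := p
  by_cases hp : msk K (j, k)
  · rw [emb, if_pos hp, emb, if_pos hp, A0, if_pos hp, add_zero]
  · have hmsk : ¬(j = 0 ∨ k = 0 ∨ K ≤ k) := hp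
    push_neg at hmsk
    obtain ⟨hj, hk, hkK⟩ := hmsk
    rw [emb, if_neg hp, emb, if_neg hp, A0, if_neg hp]
    have e1 : emb K W (j+1, k) = W (j+1) k := by
      rw [emb, if_neg]; simp [msk, hk, hkK]
    have e2 : emb K W (j-1, k) = W (j-1) k := by
      by_cases hj1 : j - 1 = 0
      · rw [emb, hj1]
        simp [msk, h0]
      · rw [emb, if_neg]; simp [msk, hj1, hk, hkK]
    have e3 : emb K W (j, k+1) = W j (k+1) := by
      by_cases hk1 : K ≤ k + 1
      · have hkk : k + 1 = K := by omega
        rw [emb, hkk]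
        simp [msk, hbK]
      · rw [emb, if_neg]; simp [msk, hj, hk1]
    have e4 : emb K W (j, k-1) = W j (k-1) := by
      by_cases hk1 : k - 1 = 0
      · rw [emb, hk1]
        simp [msk, hb0]
      · rw [emb, if_neg]; simp only [msk, not_or]; refine ⟨hj, hk1, by omega⟩
    have hp' : ¬(j = 0 ∨ k = 0 ∨ K ≤ k) := hp
    have e0 : emb K W (j, k) = W j k := if_neg hp
    simp only
    rw [e0, e1, e2, e3, e4, sN, ddx, ddy, if_neg hp', if_neg hp']
    have cx : ((hx:ℂ))^2 ≠ 0 := pow_ne_zero _ (Complex.ofReal_ne_zero.mpr hhx)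
    have cy : ((hy:ℂ))^2 ≠ 0 := pow_ne_zero _ (Complex.ofReal_ne_zero.mpr hhy)
    have cx1 : (hx:ℂ) ≠ 0 := Complex.ofReal_ne_zero.mpr hhx
    have cy1 : (hy:ℂ) ≠ 0 := Complex.ofReal_ne_zero.mpr hhy
    push_cast
    field_simp
    ring

lemma inn_re (K : ℕ) (hx hy : ℝ) {W : ℕ → ℕ → ℂ} (hW : memH K W) :
    (innH K hx hy W W).re = (hx*hy) * ∑' j : ℕ, ∑ k ∈ Finset.Icc 1 (K-1), ‖W j k‖^2 := by
  have hterm : ∀ j k, W j k * (starRingEnd ℂ) (W j k) * ((hx * hy : ℝ) : ℂ)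
      = ((‖W j k‖^2 * (hx*hy) : ℝ) : ℂ) := by
    intro j k
    rw [Complex.mul_conj, Complex.normSq_eq_norm_sq]
    push_cast
    ring
  have hrow : ∀ j, ∑ k ∈ Finset.Icc 1 (K - 1),
      W (j + 1) k * (starRingEnd ℂ) (W (j + 1) k) * ((hx * hy : ℝ) : ℂ)
      = (((∑ k ∈ Finset.Icc 1 (K - 1), ‖W (j+1) k‖^2) * (hx*hy) : ℝ) : ℂ) := by
    intro j
    rw [Finset.sum_mul]
    push_cast
    refine Finset.sum_congr rfl fun k _ => ?_
    have := hterm (j+1) k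
    push_cast at this
    rw [this]
  rw [innH]
  rw [tsum_congr hrow, ← Complex.ofReal_tsum, Complex.ofReal_re]
  set t : ℕ → ℝ := fun j => ∑ k ∈ Finset.Icc 1 (K - 1), ‖W j k‖^2 with ht
  have hsum : Summable t := hW.2.2.2
  have h0 : t 0 = 0 := by
    simp [ht, hW.1]
  calc ∑' j, t (j+1) * (hx*hy) = (∑' j, t (j+1)) * (hx*hy) := tsum_mul_right
    _ = (∑' j, t j) * (hx*hy) := by
        rw [hsum.tsum_eq_zero_add, h0, zero_add]
    _ = (hx*hy) * ∑' j, t j := by ring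

def embE (K : ℕ) (W : ℕ → ℕ → ℂ) (hW : memH K W) : E' :=
  ⟨emb K W, memℓp_of_summable_sq (summable_emb hW)⟩

lemma embE_coe (K : ℕ) (W : ℕ → ℕ → ℂ) (hW : memH K W) :
    (embE K W hW : ι' → ℂ) = emb K W := rfl

lemma sN_msk (K : ℕ) (hx hy : ℝ) (W : ℕ → ℕ → ℂ) {j k : ℕ} (hp : j = 0 ∨ k = 0 ∨ K ≤ k) :
    sN K hx hy W j k = W j k := by
  rw [sN, ddx, if_pos hp, ddy, if_pos hp]; ring

lemma nrmH_eq (K : ℕ) (hx hy : ℝ) (hxy : 0 ≤ hx*hy) {W : ℕ → ℕ → ℂ} (hW : memH K W) :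
    nrmH K hx hy W = Real.sqrt (hx*hy) * ‖embE K W hW‖ := by
  rw [nrmH, inn_re K hx hy hW]
  have h1 : ∑' j : ℕ, ∑ k ∈ Finset.Icc 1 (K-1), ‖W j k‖^2 = ‖embE K W hW‖^2 := by
    rw [norm_sq_E, embE_coe, tsum_sq_prod (emb_msk K W) (summable_emb hW)]
    exact (tsum_congr fun j => row_sum_emb hW.1 j).symm
  rw [h1, Real.sqrt_mul hxy, Real.sqrt_sq (norm_nonneg _)]

end S2

/-- `s_N : H_h → H_h` is bijective with boundedly invertible inverse of norm
at most `3`: `s_N` maps `H_h` into `H_h`, every `W ∈ H_h` satisfies `‖W‖ ≤ 3‖s_N W‖`, and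
every `F ∈ H_h` has a unique preimage in `H_h` (uniqueness as mesh functions, i.e. on the
mesh `ℕ × {0,…,K}`). -/
theorem stmt2 (K : ℕ) (hK : 2 ≤ K) (hx hy : ℝ) (hhx : 0 < hx) (hhy : 0 < hy) :
    (∀ W : ℕ → ℕ → ℂ, memH K W → memH K (sN K hx hy W)) ∧
    (∀ W : ℕ → ℕ → ℂ, memH K W →
      nrmH K hx hy W ≤ 3 * nrmH K hx hy (sN K hx hy W)) ∧
    (∀ F : ℕ → ℕ → ℂ, memH K F →
      (∃ W : ℕ → ℕ → ℂ, memH K W ∧ ∀ j k, k ≤ K → sN K hx hy W j k = F j k) ∧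
      (∀ W W' : ℕ → ℕ → ℂ, memH K W → memH K W' →
        (∀ j k, k ≤ K → sN K hx hy W j k = F j k) →
        (∀ j k, k ≤ K → sN K hx hy W' j k = F j k) →
        ∀ j k, k ≤ K → W j k = W' j k)) := by
  have hx0 : hx ≠ 0 := ne_of_gt hhx
  have hy0 : hy ≠ 0 := ne_of_gt hhy
  -- the key coe identity: emb of sN is (uN K) applied to embE
  have key : ∀ (W : ℕ → ℕ → ℂ) (hW : memH K W),
      ((S2.uN K : S2.E' →L[ℂ] S2.E') (S2.embE K W hW) : S2.ι' → ℂ)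
        = S2.emb K (sN K hx hy W) := by
    intro W hW
    rw [S2.uN_coe, S2.embE_coe, S2.emb_sN K hx hy hx0 hy0 hW.1 hW.2.1 hW.2.2.1]
  -- Part 1
  have part1 : ∀ W : ℕ → ℕ → ℂ, memH K W → memH K (sN K hx hy W) := by
    intro W hW
    have hb1 : ∀ k, sN K hx hy W 0 k = 0 := fun k => by
      rw [S2.sN_msk K hx hy W (Or.inl rfl), hW.1]
    have hb2 : ∀ j, sN K hx hy W j 0 = 0 := fun j => by
      rw [S2.sN_msk K hx hy W (Or.inr (Or.inl rfl)), hW.2.1]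
    have hb3 : ∀ j, sN K hx hy W j K = 0 := fun j => by
      rw [S2.sN_msk K hx hy W (Or.inr (Or.inr le_rfl)), hW.2.2.1]
    refine ⟨hb1, hb2, hb3, ?_⟩
    have hsq : Summable fun p : S2.ι' => ‖S2.emb K (sN K hx hy W) p‖^2 := by
      rw [← key W hW]
      exact S2.summable_sq_of_lp _
    have := S2.rows_summable_of_sq (S2.emb_msk K (sN K hx hy W)) hsq
    apply Summable.congr this
    intro j
    exact S2.row_sum_emb hb1 j
  refine ⟨part1, ?_, ?_⟩
  -- Part 2
  · intro W hW
    have hW' := part1 W hW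
    have hE : S2.embE K (sN K hx hy W) hW'
        = (S2.uN K : S2.E' →L[ℂ] S2.E') (S2.embE K W hW) := by
      apply lp.ext
      rw [S2.embE_coe, key W hW]
    rw [S2.nrmH_eq K hx hy (le_of_lt (mul_pos hhx hhy)) hW, S2.nrmH_eq K hx hy (le_of_lt (mul_pos hhx hhy)) hW', hE]
    have h3 := S2.norm_le_three K (S2.embE K W hW)
    calc Real.sqrt (hx*hy) * ‖S2.embE K W hW‖
        ≤ Real.sqrt (hx*hy) * (3 * ‖(S2.uN K : S2.E' →L[ℂ] S2.E') (S2.embE K W hW)‖) := by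
          gcongr
      _ = 3 * (Real.sqrt (hx*hy) * ‖(S2.uN K : S2.E' →L[ℂ] S2.E') (S2.embE K W hW)‖) := by
          ring
  -- Part 3
  · intro F hF
    set g : S2.E' := S2.embE K F hF with hg
    constructor
    · -- existence
      set f : S2.E' := (↑(S2.uN K)⁻¹ : S2.E' →L[ℂ] S2.E') g with hfdef
      have hfg : (S2.uN K : S2.E' →L[ℂ] S2.E') f = g := by
        rw [hfdef]
        calc (S2.uN K : S2.E' →L[ℂ] S2.E') ((↑(S2.uN K)⁻¹ : S2.E' →L[ℂ] S2.E') g)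
            = ((S2.uN K : S2.E' →L[ℂ] S2.E') * (↑(S2.uN K)⁻¹ : S2.E' →L[ℂ] S2.E')) g := rfl
          _ = (1 : S2.E' →L[ℂ] S2.E') g := by rw [(S2.uN K).mul_inv]
          _ = g := rfl
      have hcoe : (fun p => (f : S2.ι' → ℂ) p + S2.A0 K (f : S2.ι' → ℂ) p)
          = (g : S2.ι' → ℂ) := by
        rw [← S2.uN_coe, hfg]
      have hvan : ∀ p, S2.msk K p → (f : S2.ι' → ℂ) p = 0 := by
        intro p hp
        have h1 : (f : S2.ι' → ℂ) p + S2.A0 K (f : S2.ι' → ℂ) p = (g : S2.ι' → ℂ) p :=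
          congrFun hcoe p
        rw [S2.A0, if_pos hp] at h1
        have h2 : (g : S2.ι' → ℂ) p = 0 := S2.emb_msk K F p hp
        rw [h2] at h1
        simpa using h1
      set W : ℕ → ℕ → ℂ := fun j k => if K < k then F j k else (f : S2.ι' → ℂ) (j, k) with hWd
      have hWf : ∀ j k, k ≤ K → W j k = (f : S2.ι' → ℂ) (j, k) := by
        intro j k hk
        rw [hWd]
        simp only
        rw [if_neg (by omega)]
      have hWmem : memH K W := by
        refine ⟨fun k => ?_, fun j => ?_, fun j => ?_, ?_⟩
        · by_cases hk : K < k
          · rw [hWd]; simp only; rw [if_pos hk, hF.1]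
          · rw [hWf 0 k (by omega), hvan _ (Or.inl rfl)]
        · rw [hWf j 0 (by omega), hvan _ (Or.inr (Or.inl rfl))]
        · rw [hWf j K le_rfl, hvan _ (Or.inr (Or.inr le_rfl))]
        · have := S2.rows_summable_of_sq hvan (S2.summable_sq_of_lp f)
          apply Summable.congr this
          intro j
          refine Finset.sum_congr rfl fun k hk => ?_
          have hm := S2.mem_Icc_iff.mp hk
          rw [hWf j k (by omega)]
      have hembW : S2.emb K W = (f : S2.ι' → ℂ) := by
        funext p
        obtain ⟨j, k⟩ := p
        by_cases hp : S2.msk K (j, k)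
        · rw [S2.emb_msk K W _ hp, hvan _ hp]
        · have hm : ¬(j = 0 ∨ k = 0 ∨ K ≤ k) := hp
          push_neg at hm
          rw [S2.emb, if_neg hp]
          exact hWf j k (by omega)
      have hkey : S2.emb K (sN K hx hy W) = S2.emb K F := by
        rw [S2.emb_sN K hx hy hx0 hy0 hWmem.1 hWmem.2.1 hWmem.2.2.1, hembW, hcoe]
        rfl
      refine ⟨W, hWmem, ?_⟩
      intro j k hk
      by_cases hp : S2.msk K (j, k)
      · rw [S2.sN_msk K hx hy W hp]
        rcases hp with hj | hk0 | hkK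
        · simp only at hj
          subst hj
          rw [hWmem.1, hF.1]
        · simp only at hk0
          subst hk0
          rw [hWmem.2.1, hF.2.1]
        · have : k = K := by omega
          subst this
          rw [hWmem.2.2.1, hF.2.2.1]
      · have h1 := congrFun hkey (j, k)
        rw [S2.emb, if_neg hp, S2.emb, if_neg hp] at h1
        exact h1
    · -- uniqueness
      intro W W' hW hW' hsW hsW'
      have hemb : ∀ (V : ℕ → ℕ → ℂ) (hV : memH K V),
          (∀ j k, k ≤ K → sN K hx hy V j k = F j k) →
          (S2.uN K : S2.E' →L[ℂ] S2.E') (S2.embE K V hV) = g := by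
        intro V hV hs
        apply lp.ext
        rw [key V hV, S2.embE_coe]
        funext p
        obtain ⟨j, k⟩ := p
        by_cases hp : S2.msk K (j, k)
        · rw [S2.emb_msk _ _ _ hp, S2.emb_msk _ _ _ hp]
        · have hm : ¬(j = 0 ∨ k = 0 ∨ K ≤ k) := hp
          push_neg at hm
          rw [S2.emb, if_neg hp, S2.emb, if_neg hp]
          exact hs j k (by omega)
      have h1 := hemb W hW hsW
      have h2 := hemb W' hW' hsW'
      have heq : S2.embE K W hW = S2.embE K W' hW' := by
        have hu : ∀ e : S2.E', (↑(S2.uN K)⁻¹ : S2.E' →L[ℂ] S2.E')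
            ((S2.uN K : S2.E' →L[ℂ] S2.E') e) = e := by
          intro e
          calc (↑(S2.uN K)⁻¹ : S2.E' →L[ℂ] S2.E') ((S2.uN K : S2.E' →L[ℂ] S2.E') e)
              = ((↑(S2.uN K)⁻¹ : S2.E' →L[ℂ] S2.E') * (S2.uN K : S2.E' →L[ℂ] S2.E')) e := rfl
            _ = (1 : S2.E' →L[ℂ] S2.E') e := by rw [(S2.uN K).inv_mul]
            _ = e := rfl
        calc S2.embE K W hW = (↑(S2.uN K)⁻¹ : S2.E' →L[ℂ] S2.E')
              ((S2.uN K : S2.E' →L[ℂ] S2.E') (S2.embE K W hW)) := (hu _).symm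
          _ = (↑(S2.uN K)⁻¹ : S2.E' →L[ℂ] S2.E')
              ((S2.uN K : S2.E' →L[ℂ] S2.E') (S2.embE K W' hW')) := by rw [h1, h2]
          _ = S2.embE K W' hW' := hu _
      intro j k hk
      by_cases hp : S2.msk K (j, k)
      · rcases hp with hj | hk0 | hkK
        · simp only at hj
          subst hj
          rw [hW.1, hW'.1]
        · simp only at hk0
          subst hk0
          rw [hW.2.1, hW'.2.1]
        · have : k = K := by omega
          subst this
          rw [hW.2.2.1, hW'.2.2.1]
      · have h3 : (S2.embE K W hW : S2.ι' → ℂ) (j,k) = (S2.embE K W' hW' : S2.ι' → ℂ) (j,k) := by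
          rw [heq]
        rw [S2.embE_coe, S2.embE_coe, S2.emb, if_neg hp, S2.emb, if_neg hp] at h3
        exact h3
end
end

section
/- alpha is nonzero, and |alpha|^2 - beta^2 = 4*(Im a)^2 > 0; in particular |beta| < |alpha|, so mu = beta/|alpha| lies in the open interval (-1, 1). -/
noncomputable section

/-- with `a = V/(2c) + i ℏ/(τ c)`, `α = 2a + (1-4θ)h_x² a²` and
`β = 2 Re a + (1-4θ)h_x² |a|²` for `θ ∈ (1/12, 1/8)`, one has `α ≠ 0` and
`|α|² - β² = 4 (Im a)² > 0`; in particular `|β| < |α|`, so `μ = β/|α| ∈ (-1, 1)`. -/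
theorem stmt11 (hbar tau hx c : ℝ)
    (hhbar : 0 < hbar) (htau : 0 < tau) (hhx : 0 < hx) (hc : 0 < c)
    (th : ℝ) (hth : th ∈ Set.Ioo (1 / 12 : ℝ) (1 / 8)) (V : ℝ) :
    let a : ℂ := ((V / (2 * c) : ℝ) : ℂ) + Complex.I * ((hbar / (tau * c) : ℝ) : ℂ)
    let alpha : ℂ := 2 * a + (((1 - 4 * th) * hx ^ 2 : ℝ) : ℂ) * a ^ 2
    let beta : ℝ := 2 * a.re + (1 - 4 * th) * hx ^ 2 * ‖a‖ ^ 2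
    alpha ≠ 0 ∧
    ‖alpha‖ ^ 2 - beta ^ 2 = 4 * a.im ^ 2 ∧
    0 < ‖alpha‖ ^ 2 - beta ^ 2 ∧
    |beta| < ‖alpha‖ ∧
    beta / ‖alpha‖ ∈ Set.Ioo (-1 : ℝ) 1 := by
  intro a alpha beta
  have him : a.im = hbar / (tau * c) := by
    simp only [a, Complex.add_im, Complex.ofReal_im, Complex.mul_im, Complex.I_re,
      Complex.I_im, Complex.ofReal_re]
    ring
  have hre : a.re = V / (2 * c) := by
    simp only [a, Complex.add_re, Complex.ofReal_re, Complex.mul_re, Complex.I_re,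
      Complex.I_im, Complex.ofReal_im]
    ring
  have hy : 0 < a.im := by
    rw [him]; positivity
  -- main identity
  have hkey : ‖alpha‖ ^ 2 - beta ^ 2 = 4 * a.im ^ 2 := by
    have h1 : ‖alpha‖ ^ 2 = alpha.re ^ 2 + alpha.im ^ 2 := by
      rw [Complex.sq_norm, Complex.normSq_apply]; ring
    have h2 : ‖a‖ ^ 2 = a.re ^ 2 + a.im ^ 2 := by
      rw [Complex.sq_norm, Complex.normSq_apply]; ring
    have hr : alpha.re = 2 * a.re + (1 - 4 * th) * hx ^ 2 * (a.re ^ 2 - a.im ^ 2) := by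
      simp only [alpha, Complex.add_re, Complex.add_im, Complex.mul_re, Complex.mul_im,
        Complex.ofReal_re, Complex.ofReal_im, pow_two, 
        Complex.re_ofNat, Complex.im_ofNat]
      ring
    have hi : alpha.im = 2 * a.im + (1 - 4 * th) * hx ^ 2 * (2 * a.re * a.im) := by
      simp only [alpha, Complex.add_re, Complex.add_im, Complex.mul_re, Complex.mul_im,
        Complex.ofReal_re, Complex.ofReal_im, pow_two, 
        Complex.re_ofNat, Complex.im_ofNat]
      ring
    simp only [beta, h1, h2, hr, hi]
    ring
  have hpos : 0 < ‖alpha‖ ^ 2 - beta ^ 2 := by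
    rw [hkey]; positivity
  have habs : |beta| < ‖alpha‖ := by
    have h0 : 0 ≤ ‖alpha‖ := norm_nonneg _
    nlinarith [abs_nonneg beta, sq_abs beta]
  have hapos : 0 < ‖alpha‖ := lt_of_le_of_lt (abs_nonneg beta) habs
  refine ⟨?_, hkey, hpos, habs, ?_⟩
  · intro h
    rw [h] at hapos
    simp at hapos
  · constructor
    · rw [lt_div_iff₀ hapos]
      nlinarith [abs_lt.mp habs]
    · rw [div_lt_one hapos]
      nlinarith [abs_lt.mp habs]
end
end

section
/- alpha is not a nonnegative real number, so its argument phi can be chosen in the open interval (0, 2*pi); and the coefficient c_1 = -(|alpha|^{1/2}/2)*e^{-i*phi/2} has nonnegative imaginary part, namely Im c_1 = (|alpha|^{1/2}/2)*sin(phi/2) >= 0. -/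
noncomputable section

/-- with `a = V/(2c) + i ℏ/(τ c)` and `α = 2a + (1-4θ)h_x² a²` for
`θ ∈ (1/12, 1/8)`, `α` is not a nonnegative real number, so its argument `φ` can be
chosen in the open interval `(0, 2π)`; and the coefficient
`c₁ = -(|α|^{1/2}/2) e^{-iφ/2}` has imaginary part `(|α|^{1/2}/2) sin(φ/2) ≥ 0`. -/
theorem stmt12 (hbar tau hx c : ℝ)
    (hhbar : 0 < hbar) (htau : 0 < tau) (hhx : 0 < hx) (hc : 0 < c)
    (th : ℝ) (hth : th ∈ Set.Ioo (1 / 12 : ℝ) (1 / 8)) (V : ℝ) :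
    let a : ℂ := ((V / (2 * c) : ℝ) : ℂ) + Complex.I * ((hbar / (tau * c) : ℝ) : ℂ)
    let alpha : ℂ := 2 * a + (((1 - 4 * th) * hx ^ 2 : ℝ) : ℂ) * a ^ 2
    ¬(alpha.im = 0 ∧ 0 ≤ alpha.re) ∧
    ∃ phi : ℝ, phi ∈ Set.Ioo (0 : ℝ) (2 * Real.pi) ∧
      alpha = ((‖alpha‖ : ℝ) : ℂ) * Complex.exp ((phi : ℂ) * Complex.I) ∧
      (-(((Real.sqrt (‖alpha‖) / 2 : ℝ)) : ℂ)
          * Complex.exp (-((phi / 2 : ℝ) : ℂ) * Complex.I)).im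
        = Real.sqrt (‖alpha‖) / 2 * Real.sin (phi / 2) ∧
      0 ≤ (-(((Real.sqrt (‖alpha‖) / 2 : ℝ)) : ℂ)
          * Complex.exp (-((phi / 2 : ℝ) : ℂ) * Complex.I)).im := by
  intro a alpha
  set x : ℝ := V / (2 * c) with hxdef
  set y : ℝ := hbar / (tau * c) with hydef
  set k : ℝ := (1 - 4 * th) * hx ^ 2 with hkdef
  have hy : 0 < y := div_pos hhbar (mul_pos htau hc)
  have hk : 0 < k := by
    have : 0 < 1 - 4 * th := by nlinarith [hth.2]
    positivity
  have har : a.re = x := by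
    simp only [a, Complex.add_re, Complex.mul_re, Complex.I_re, Complex.I_im,
      Complex.ofReal_re, Complex.ofReal_im]
    ring
  have hai : a.im = y := by
    simp only [a, Complex.add_im, Complex.mul_im, Complex.I_re, Complex.I_im,
      Complex.ofReal_re, Complex.ofReal_im]
    ring
  have haim : alpha.im = 2 * y + k * (2 * x * y) := by
    simp only [alpha, pow_two, Complex.add_im, Complex.mul_im, Complex.mul_re,
      Complex.ofReal_re, Complex.ofReal_im, Complex.re_ofNat, Complex.im_ofNat, har, hai]
    ring
  have hare : alpha.re = 2 * x + k * (x ^ 2 - y ^ 2) := by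
    simp only [alpha, pow_two, Complex.add_re, Complex.mul_im, Complex.mul_re,
      Complex.ofReal_re, Complex.ofReal_im, Complex.re_ofNat, Complex.im_ofNat, har, hai]
    ring
  have hnot : ¬(alpha.im = 0 ∧ 0 ≤ alpha.re) := by
    rintro ⟨him, hre⟩
    rw [haim] at him
    rw [hare] at hre
    have hkx : k * x = -1 := by
      have h2y : (2 * y) ≠ 0 := by positivity
      have h0 : 2 * y * (1 + k * x) = 0 := by nlinarith [him]
      have := (mul_eq_zero.mp h0).resolve_left h2y
      linarith
    nlinarith [sq_nonneg (k * y), mul_le_mul_of_nonneg_left hre hk.le]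
  refine ⟨hnot, ?_⟩
  have hne : alpha ≠ 0 := fun h => hnot ⟨by simp [h], by simp [h]⟩
  have harg := Complex.arg_mem_Ioc alpha
  have hargne : Complex.arg alpha ≠ 0 := fun h =>
    hnot ⟨(Complex.arg_eq_zero_iff.mp h).2, (Complex.arg_eq_zero_iff.mp h).1⟩
  have hpi := Real.pi_pos
  set t := Complex.arg alpha with htdef
  set phi : ℝ := if 0 < t then t else t + 2 * Real.pi with hphidef
  have hphi : phi ∈ Set.Ioo (0 : ℝ) (2 * Real.pi) := by
    by_cases h : 0 < t
    · simp only [hphidef, if_pos h]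
      exact ⟨h, by linarith [harg.2]⟩
    · have ht : t < 0 := lt_of_le_of_ne (not_lt.mp h) hargne
      simp only [hphidef, if_neg h]
      exact ⟨by linarith [harg.1], by linarith⟩
  have hexp : Complex.exp ((phi : ℂ) * Complex.I) = Complex.exp ((t : ℂ) * Complex.I) := by
    by_cases h : 0 < t
    · simp [hphidef, if_pos h]
    · simp only [hphidef, if_neg h]
      rw [Complex.ofReal_add, add_mul, Complex.exp_add]
      norm_num [Complex.exp_two_pi_mul_I]
  have halpha : alpha = ((‖alpha‖ : ℝ) : ℂ) * Complex.exp ((phi : ℂ) * Complex.I) := by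
    rw [hexp]
    exact (Complex.norm_mul_exp_arg_mul_I alpha).symm
  have him : (-(((Real.sqrt (‖alpha‖) / 2 : ℝ)) : ℂ)
      * Complex.exp (-((phi / 2 : ℝ) : ℂ) * Complex.I)).im
      = Real.sqrt (‖alpha‖) / 2 * Real.sin (phi / 2) := by
    rw [show -((phi / 2 : ℝ) : ℂ) * Complex.I = ((-(phi / 2) : ℝ) : ℂ) * Complex.I by
      push_cast; ring, Complex.exp_mul_I, ← Complex.ofReal_cos, ← Complex.ofReal_sin]
    simp only [Complex.add_im, Complex.mul_im, Complex.neg_re, Complex.neg_im,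
      Complex.ofReal_re, Complex.ofReal_im, Complex.I_re, Complex.I_im,
      Real.sin_neg, Real.cos_neg]
    ring
  refine ⟨phi, hphi, halpha, him, ?_⟩
  rw [him]
  have hs : 0 ≤ Real.sin (phi / 2) :=
    Real.sin_nonneg_of_nonneg_of_le_pi (by linarith [hphi.1]) (by linarith [hphi.2])
  positivity
end
end
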